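/- For m ≥ 1 and n ≥ k ≥ 0, the degenerate Whitney number satisfies W_{m,r}(n,k|λ) = (n!/(k! m^k)) ∑_{l=0}^k C(k,l)(-1)^{k-l} binom_λ(ml+r, n), where binom_λ(y,n) = y(y-λ)⋯(y-(n-1)λ)/n!. For n < k, the alternating sum ∑_{l=0}^k C(k,l)(-1)^{k-l} binom_λ(ml+r,n) vanishes. -/

import Mathlib

open Finset PowerSeries

/-- The λ-binomial coefficient `binom_λ(y,n) = y(y-λ)⋯(y-(n-1)λ)/n!`. -/
noncomputable def dbinom (lam y : ℝ) (n : ℕ) : ℝ :=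
  (∏ i ∈ range n, (y - i * lam)) / n.factorial

/-- `(1 + λt)^{y/λ}` as a formal power series: `∑_n binom_λ(y,n) t^n`. -/
noncomputable def degExp (lam y : ℝ) : PowerSeries ℝ :=
  PowerSeries.mk fun n => dbinom lam y n

/-- The λ-falling factorial. -/
noncomputable def ffold (lam x : ℝ) (i : ℕ) : ℝ := ∏ j ∈ range i, (x - j * lam)

lemma dbinom_eq (lam x : ℝ) (n : ℕ) : dbinom lam x n = ffold lam x n / n.factorial := rfl

lemma ffold_succ (lam x : ℝ) (i : ℕ) :
    ffold lam x (i + 1) = ffold lam x i * (x - i * lam) := by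
  simp [ffold, prod_range_succ]

lemma vand (lam x y : ℝ) : ∀ n : ℕ, ffold lam (x + y) n =
    ∑ i ∈ range (n + 1), (n.choose i : ℝ) * ffold lam x i * ffold lam y (n - i) := by
  intro n
  induction n with
  | zero => simp [ffold]
  | succ n ih =>
    have pascal : ∀ i : ℕ, ((n + 1).choose (i + 1) : ℝ)
        = (n.choose i : ℝ) + (n.choose (i + 1) : ℝ) := by
      intro i; rw [Nat.choose_succ_succ]; push_cast; ring
    have key : ∀ i ∈ range (n + 1),
        (n.choose i : ℝ) * ffold lam x i * ffold lam y (n - i) * (x + y - n * lam)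
        = (n.choose i : ℝ) * ffold lam x (i + 1) * ffold lam y (n - i) +
          (n.choose i : ℝ) * ffold lam x i * ffold lam y (n + 1 - i) := by
      intro i hi
      rw [mem_range] at hi
      have hi' : i ≤ n := Nat.lt_succ_iff.mp hi
      have h2 : ffold lam y (n + 1 - i) = ffold lam y (n - i) * (y - (n - i : ℕ) * lam) := by
        rw [show n + 1 - i = (n - i) + 1 by omega, ffold_succ]
      have h3 : ((n - i : ℕ) : ℝ) = (n : ℝ) - i := by
        rw [Nat.cast_sub hi']
      rw [ffold_succ, h2, h3]
      ring
    have hL : ffold lam (x + y) (n + 1)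
        = (∑ i ∈ range (n + 1), (n.choose i : ℝ) * ffold lam x (i + 1) * ffold lam y (n - i))
          + ∑ i ∈ range (n + 1), (n.choose i : ℝ) * ffold lam x i * ffold lam y (n + 1 - i) := by
      rw [ffold_succ, ih, sum_mul, sum_congr rfl key, sum_add_distrib]
    rw [hL]
    -- RHS: peel off the i = 0 term
    rw [sum_range_succ'
      (fun i => ((n + 1).choose i : ℝ) * ffold lam x i * ffold lam y (n + 1 - i)) (n + 1)]
    have e1 : ∀ i ∈ range (n + 1),
        ((n + 1).choose (i + 1) : ℝ) * ffold lam x (i + 1) * ffold lam y (n + 1 - (i + 1))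
        = (n.choose i : ℝ) * ffold lam x (i + 1) * ffold lam y (n - i)
          + (n.choose (i + 1) : ℝ) * ffold lam x (i + 1) * ffold lam y (n - i) := by
      intro i _
      rw [show n + 1 - (i + 1) = n - i by omega, pascal]; ring
    rw [sum_congr rfl e1, sum_add_distrib]
    have e2 : ∑ i ∈ range (n + 1),
        (n.choose (i + 1) : ℝ) * ffold lam x (i + 1) * ffold lam y (n - i)
        = ∑ i ∈ range n, (n.choose (i + 1) : ℝ) * ffold lam x (i + 1) * ffold lam y (n - i) := by
      rw [sum_range_succ]
      simp
    have e3 : ∑ i ∈ range (n + 1), (n.choose i : ℝ) * ffold lam x i * ffold lam y (n + 1 - i)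
        = (∑ i ∈ range n, (n.choose (i + 1) : ℝ) * ffold lam x (i + 1) * ffold lam y (n - i))
          + ffold lam y (n + 1) := by
      rw [sum_range_succ'
        (fun i => (n.choose i : ℝ) * ffold lam x i * ffold lam y (n + 1 - i)) n]
      congr 1
      · refine sum_congr rfl fun i _ => ?_
        rw [show n + 1 - (i + 1) = n - i by omega]
      · simp [ffold]
    rw [e2, e3]
    simp only [Nat.choose_zero_right, Nat.cast_one, one_mul]
    have : ffold lam x 0 = 1 := by simp [ffold]
    rw [this]
    simp only [Nat.sub_zero]
    ring

lemma degExp_mul (lam x y : ℝ) : degExp lam x * degExp lam y = degExp lam (x + y) := by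
  ext n
  rw [degExp, degExp, degExp, coeff_mul]
  simp only [coeff_mk]
  rw [Finset.Nat.sum_antidiagonal_eq_sum_range_succ_mk]
  rw [dbinom_eq, vand lam x y n, sum_div]
  refine sum_congr rfl fun i hi => ?_
  rw [mem_range] at hi
  have hi' : i ≤ n := Nat.lt_succ_iff.mp hi
  rw [dbinom_eq, dbinom_eq]
  have hfac : (n.choose i : ℝ) * i.factorial * (n - i).factorial = n.factorial := by
    rw [← Nat.cast_mul, ← Nat.cast_mul, ← Nat.choose_mul_factorial_mul_factorial hi']
  have h1 : (i.factorial : ℝ) ≠ 0 := Nat.cast_ne_zero.mpr i.factorial_ne_zero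
  have h2 : ((n - i).factorial : ℝ) ≠ 0 := Nat.cast_ne_zero.mpr (n - i).factorial_ne_zero
  have h3 : (n.factorial : ℝ) ≠ 0 := Nat.cast_ne_zero.mpr n.factorial_ne_zero
  field_simp
  rw [← hfac]
  ring

lemma degExp_zero (lam : ℝ) : degExp lam 0 = 1 := by
  ext n
  rw [degExp, coeff_mk, coeff_one, dbinom]
  cases n with
  | zero => simp
  | succ n =>
    rw [prod_eq_zero (mem_range.mpr (Nat.succ_pos n))]
    · simp
    · simp

lemma degExp_pow (lam x : ℝ) (l : ℕ) : (degExp lam x) ^ l = degExp lam (x * l) := by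
  induction l with
  | zero => simp [degExp_zero]
  | succ l ih =>
    rw [pow_succ, ih, degExp_mul]
    push_cast
    ring_nf

/-- If `W` is the sequence of degenerate Whitney numbers `W_{m,r}(·,k|λ)`, defined by
`(1/(m^k k!))(1+λt)^{r/λ}((1+λt)^{m/λ}-1)^k = ∑_n W_n t^n/n!`, then for `n ≥ k`,
`W n = (n!/(k! m^k)) ∑_{l=0}^k C(k,l)(-1)^{k-l} binom_λ(ml+r,n)`, while for `n < k`
the alternating sum `∑_{l=0}^k C(k,l)(-1)^{k-l} binom_λ(ml+r,n)` vanishes. -/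
theorem stmt13 (lam : ℝ) (hlam : lam ≠ 0) (m r k : ℕ) (hm : 1 ≤ m) (W : ℕ → ℝ)
    (hW : degExp lam r * (degExp lam m - 1) ^ k =
      ((m : ℝ) ^ k * k.factorial) • PowerSeries.mk (fun n => W n / n.factorial)) :
    ∀ n : ℕ,
      (k ≤ n → W n = (n.factorial : ℝ) / ((k.factorial : ℝ) * (m : ℝ) ^ k) *
        ∑ l ∈ range (k + 1), (k.choose l : ℝ) * (-1) ^ (k - l) * dbinom lam (m * l + r) n) ∧
      (n < k → ∑ l ∈ range (k + 1),
        (k.choose l : ℝ) * (-1) ^ (k - l) * dbinom lam (m * l + r) n = 0) := by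
  -- Expand the left side as a sum of degExp's
  have expand : degExp lam r * (degExp lam m - 1) ^ k =
      ∑ l ∈ range (k + 1), C ((k.choose l : ℝ) * (-1) ^ (k - l)) * degExp lam (m * l + r) := by
    rw [sub_pow, mul_sum]
    refine sum_congr rfl fun l hl => ?_
    rw [mem_range] at hl
    have hl' : l ≤ k := Nat.lt_succ_iff.mp hl
    rw [degExp_pow]
    have h1 : degExp lam (r : ℝ) *
        ((-1 : PowerSeries ℝ) ^ (l + k) * degExp lam ((m : ℝ) * l) * (1 : PowerSeries ℝ) ^ (k - l)
          * (k.choose l : PowerSeries ℝ))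
        = ((-1 : PowerSeries ℝ) ^ (l + k) * (k.choose l : PowerSeries ℝ))
          * (degExp lam (r : ℝ) * degExp lam ((m : ℝ) * l)) := by
      ring
    rw [h1, degExp_mul]
    have hsign : ((-1 : PowerSeries ℝ)) ^ (l + k) = C ((-1 : ℝ) ^ (k - l)) := by
      rw [show l + k = (k - l) + 2 * l by omega, pow_add, pow_mul]
      simp [map_pow]
    have hchoose : (k.choose l : PowerSeries ℝ) = C (k.choose l : ℝ) := by
      rw [← map_natCast (C (R := ℝ))]
    rw [hsign, hchoose, ← map_mul]
    rw [show ((r : ℝ) + (m : ℝ) * l) = (m : ℝ) * l + r by ring]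
    rw [mul_comm ((-1 : ℝ) ^ (k - l))]
  -- coefficient identity
  have coeffid : ∀ n : ℕ, ∑ l ∈ range (k + 1),
      (k.choose l : ℝ) * (-1) ^ (k - l) * dbinom lam (m * l + r) n
      = (m : ℝ) ^ k * k.factorial * (W n / n.factorial) := by
    intro n
    have := congrArg (PowerSeries.coeff n) (expand.symm.trans hW)
    rw [map_sum] at this
    simp only [coeff_smul, coeff_mk, smul_eq_mul] at this
    rw [← this]
    refine sum_congr rfl fun l hl => ?_
    rw [coeff_C_mul, degExp, coeff_mk]
  intro n
  constructor
  · intro hkn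
    have hmk : ((m : ℝ) ^ k) ≠ 0 := pow_ne_zero _ (by positivity)
    have hkf : ((k.factorial : ℝ)) ≠ 0 := Nat.cast_ne_zero.mpr k.factorial_ne_zero
    have hnf : ((n.factorial : ℝ)) ≠ 0 := Nat.cast_ne_zero.mpr n.factorial_ne_zero
    rw [coeffid n]
    field_simp
  · intro hnk
    have hdvd : (X : PowerSeries ℝ) ^ k ∣ degExp lam r * (degExp lam m - 1) ^ k := by
      refine Dvd.dvd.mul_left (pow_dvd_pow_of_dvd ?_ k) _
      rw [PowerSeries.X_dvd_iff]
      simp only [map_sub, map_one]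
      rw [degExp, ← coeff_zero_eq_constantCoeff_apply, coeff_mk, dbinom]
      simp
    rw [coeffid n]
    have := (PowerSeries.X_pow_dvd_iff.mp hdvd) n hnk
    rw [hW] at this
    simp only [coeff_smul, coeff_mk, smul_eq_mul] at this
    rw [this]
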